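/- Let M = (1/√3) · [[1, (1/√2)e^{iπ/3}], [√2, -2e^{iπ/3}]], u₀ = (0,1), B = (M†)⁻¹, and uⱼ = Bʲu₀. Then {u₀, u₁, u₂, u₃} is a SIC-POVM in ℂ², i.e., each uⱼ is a unit vector and |⟨uⱼ, uₖ⟩| = 1/√3 for all 0 ≤ j < k ≤ 3. -/

import Mathlib

open Matrix Complex

noncomputable def M : Matrix (Fin 2) (Fin 2) ℂ :=
  ((Real.sqrt 3 : ℂ)⁻¹) •
    !![1, (Real.sqrt 2 : ℂ)⁻¹ * Complex.exp (Real.pi / 3 * Complex.I);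
       (Real.sqrt 2 : ℂ), -2 * Complex.exp (Real.pi / 3 * Complex.I)]

noncomputable def B : Matrix (Fin 2) (Fin 2) ℂ := (Mᴴ)⁻¹

noncomputable def u₀ : Fin 2 → ℂ := ![0, 1]

noncomputable def w1 : Fin 2 → ℂ :=
  ![(Real.sqrt 2:ℂ)/2*Complex.I + (Real.sqrt 2:ℂ)*(Real.sqrt 3:ℂ)/6,
    -(Complex.I/2) - (Real.sqrt 3:ℂ)/6]

noncomputable def w2 : Fin 2 → ℂ :=
  ![(Real.sqrt 2:ℂ)/2 + (Real.sqrt 2:ℂ)*(Real.sqrt 3:ℂ)/6*Complex.I,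
    (Real.sqrt 3:ℂ)/3*Complex.I]

noncomputable def w3 : Fin 2 → ℂ :=
  ![(Real.sqrt 2:ℂ)/2*Complex.I + (Real.sqrt 2:ℂ)*(Real.sqrt 3:ℂ)/6,
    (Real.sqrt 3:ℂ)/3]

noncomputable def Bex : Matrix (Fin 2) (Fin 2) ℂ :=
  !![2*(Real.sqrt 3:ℂ)/3, (Real.sqrt 2:ℂ)/2*Complex.I + (Real.sqrt 2:ℂ)*(Real.sqrt 3:ℂ)/6;
     (Real.sqrt 2:ℂ)*(Real.sqrt 3:ℂ)/6, -(Complex.I/2) - (Real.sqrt 3:ℂ)/6]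

lemma h2 : (Real.sqrt 2:ℂ)^2 = 2 := by
  norm_cast
  rw [Real.sq_sqrt] <;> norm_num

lemma h3 : (Real.sqrt 3:ℂ)^2 = 3 := by
  norm_cast
  rw [Real.sq_sqrt] <;> norm_num

lemma hI : Complex.I^2 = -1 := Complex.I_sq

lemma ha0 : (Real.sqrt 2:ℂ) ≠ 0 := by
  simp [Real.sqrt_eq_zero']

lemma hb0 : (Real.sqrt 3:ℂ) ≠ 0 := by
  simp [Real.sqrt_eq_zero']

lemma ia : (Real.sqrt 2:ℂ)⁻¹ = (Real.sqrt 2:ℂ)/2 := by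
  rw [eq_div_iff (by norm_num : (2:ℂ) ≠ 0), inv_mul_eq_div, div_eq_iff ha0]
  linear_combination -h2

lemma ib : (Real.sqrt 3:ℂ)⁻¹ = (Real.sqrt 3:ℂ)/3 := by
  rw [eq_div_iff (by norm_num : (3:ℂ) ≠ 0), inv_mul_eq_div, div_eq_iff hb0]
  linear_combination -h3

lemma he : Complex.exp (Real.pi / 3 * Complex.I) = 1/2 + (Real.sqrt 3:ℂ)/2*Complex.I := by
  have : ((Real.pi:ℂ) / 3) * Complex.I = ((Real.pi/3 : ℝ) : ℂ) * Complex.I := by push_cast; ring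
  rw [this, Complex.exp_mul_I, ← Complex.ofReal_cos, ← Complex.ofReal_sin,
    Real.cos_pi_div_three, Real.sin_pi_div_three]
  push_cast
  ring

lemma hB : B = Bex := by
  rw [B]
  apply Matrix.inv_eq_left_inv
  ext i j
  fin_cases i <;> fin_cases j
  · simp [Bex, M, Matrix.mul_apply, Fin.sum_univ_two, Matrix.conjTranspose_apply, he, ia, ib,
      Complex.conj_ofReal, map_ofNat, map_inv₀, map_div₀, Complex.ofReal_inv, Complex.ofReal_ofNat]
    linear_combination ((1/24)*(Real.sqrt 3:ℂ)*Complex.I + (1/72)*(Real.sqrt 3:ℂ)^2 + (-1/24)*(Real.sqrt 3:ℂ)^2*Complex.I^2 + (-1/72)*(Real.sqrt 3:ℂ)^3*Complex.I) * h2 + ((1/4) + (-1/12)*Complex.I^2 + (-1/36)*(Real.sqrt 3:ℂ)*Complex.I) * h3 + ((-1/4)) * hI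
  · simp [Bex, M, Matrix.mul_apply, Fin.sum_univ_two, Matrix.conjTranspose_apply, he, ia, ib,
      Complex.conj_ofReal, map_ofNat, map_inv₀, map_div₀, Complex.ofReal_inv, Complex.ofReal_ofNat]
    linear_combination (0) * h2 + ((1/6)*(Real.sqrt 2:ℂ) + (1/6)*(Real.sqrt 2:ℂ)*Complex.I^2 + (1/18)*(Real.sqrt 2:ℂ)*(Real.sqrt 3:ℂ)*Complex.I) * h3 + ((1/2)*(Real.sqrt 2:ℂ)) * hI
  · simp [Bex, M, Matrix.mul_apply, Fin.sum_univ_two, Matrix.conjTranspose_apply, he, ia, ib,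
      Complex.conj_ofReal, map_ofNat, map_inv₀, map_div₀, Complex.ofReal_inv, Complex.ofReal_ofNat]
    linear_combination (0) * h2 + ((1/24)*(Real.sqrt 2:ℂ) + (1/24)*(Real.sqrt 2:ℂ)*Complex.I^2 + (1/72)*(Real.sqrt 2:ℂ)*(Real.sqrt 3:ℂ)*Complex.I) * h3 + ((1/8)*(Real.sqrt 2:ℂ)) * hI
  · simp [Bex, M, Matrix.mul_apply, Fin.sum_univ_two, Matrix.conjTranspose_apply, he, ia, ib,
      Complex.conj_ofReal, map_ofNat, map_inv₀, map_div₀, Complex.ofReal_inv, Complex.ofReal_ofNat]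
    linear_combination ((1/18)*(Real.sqrt 3:ℂ)^2) * h2 + ((1/6) + (-1/6)*Complex.I^2 + (-1/18)*(Real.sqrt 3:ℂ)*Complex.I) * h3 + ((-1/2)) * hI

lemma hw1 : Bex.mulVec u₀ = w1 := by
  funext i
  fin_cases i
  · simp [Bex, u₀, w1, Matrix.mulVec, dotProduct, Fin.sum_univ_two]
    
  · simp [Bex, u₀, w1, Matrix.mulVec, dotProduct, Fin.sum_univ_two]
    

lemma hw2 : Bex.mulVec w1 = w2 := by
  funext i
  fin_cases i
  · simp [Bex, w1, w2, Matrix.mulVec, dotProduct, Fin.sum_univ_two]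
    linear_combination (0) * h2 + ((1/12)*(Real.sqrt 2:ℂ)) * h3 + ((-1/4)*(Real.sqrt 2:ℂ)) * hI
  · simp [Bex, w1, w2, Matrix.mulVec, dotProduct, Fin.sum_univ_two]
    linear_combination ((1/12)*(Real.sqrt 3:ℂ)*Complex.I + (1/36)*(Real.sqrt 3:ℂ)^2) * h2 + ((1/12)) * h3 + ((1/4)) * hI

lemma hw3 : Bex.mulVec w2 = w3 := by
  funext i
  fin_cases i
  · simp [Bex, w2, w3, Matrix.mulVec, dotProduct, Fin.sum_univ_two]
    linear_combination (0) * h2 + ((1/6)*(Real.sqrt 2:ℂ)*Complex.I) * h3 + ((1/6)*(Real.sqrt 2:ℂ)*(Real.sqrt 3:ℂ)) * hI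
  · simp [Bex, w2, w3, Matrix.mulVec, dotProduct, Fin.sum_univ_two]
    linear_combination ((1/12)*(Real.sqrt 3:ℂ) + (1/36)*(Real.sqrt 3:ℂ)^2*Complex.I) * h2 + (0) * h3 + ((-1/6)*(Real.sqrt 3:ℂ)) * hI

lemma p0 : (B ^ (0:ℕ)).mulVec u₀ = u₀ := by simp

lemma p1 : (B ^ (1:ℕ)).mulVec u₀ = w1 := by rw [pow_one, hB, hw1]

lemma p2 : (B ^ (2:ℕ)).mulVec u₀ = w2 := by
  rw [pow_two, ← Matrix.mulVec_mulVec, hB, hw1, hw2]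

lemma p3 : (B ^ (3:ℕ)).mulVec u₀ = w3 := by
  rw [pow_succ, pow_two, ← Matrix.mulVec_mulVec, ← Matrix.mulVec_mulVec, hB, hw1, hw2, hw3]

lemma nrm0 : star u₀ ⬝ᵥ u₀ = (1:ℂ) := by
  simp [u₀, dotProduct, Fin.sum_univ_two]

lemma nrm1 : star w1 ⬝ᵥ w1 = (1:ℂ) := by
  simp [w1, dotProduct, Fin.sum_univ_two, Complex.conj_ofReal, map_ofNat, map_inv₀, map_div₀, Complex.ofReal_inv, Complex.ofReal_ofNat]
  linear_combination ((-1/4)*Complex.I^2 + (1/36)*(Real.sqrt 3:ℂ)^2) * h2 + ((1/12)) * h3 + ((-3/4)) * hI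

lemma nrm2 : star w2 ⬝ᵥ w2 = (1:ℂ) := by
  simp [w2, dotProduct, Fin.sum_univ_two, Complex.conj_ofReal, map_ofNat, map_inv₀, map_div₀, Complex.ofReal_inv, Complex.ofReal_ofNat]
  linear_combination ((1/4) + (-1/36)*(Real.sqrt 3:ℂ)^2*Complex.I^2) * h2 + ((-1/6)*Complex.I^2) * h3 + ((-1/2)) * hI

lemma nrm3 : star w3 ⬝ᵥ w3 = (1:ℂ) := by
  simp [w3, dotProduct, Fin.sum_univ_two, Complex.conj_ofReal, map_ofNat, map_inv₀, map_div₀, Complex.ofReal_inv, Complex.ofReal_ofNat]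
  linear_combination ((-1/4)*Complex.I^2 + (1/36)*(Real.sqrt 3:ℂ)^2) * h2 + ((1/6)) * h3 + ((-1/2)) * hI

lemma abs_of_mulconj (z : ℂ) (h : z * (starRingEnd ℂ) z = (((3:ℝ)⁻¹ : ℝ) : ℂ)) :
    ‖z‖ = (Real.sqrt 3)⁻¹ := by
  have hn : Complex.normSq z = (3:ℝ)⁻¹ := by
    have h' := Complex.mul_conj z
    rw [h'] at h
    exact_mod_cast h
  rw [← Real.sqrt_inv, Complex.norm_def, hn]

lemma dt01 : ‖star u₀ ⬝ᵥ w1‖ = (Real.sqrt 3)⁻¹ := by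
  apply abs_of_mulconj
  simp [u₀, w1, dotProduct, Fin.sum_univ_two, Complex.conj_ofReal, map_ofNat, map_inv₀, map_div₀, Complex.ofReal_inv, Complex.ofReal_ofNat]
  linear_combination (0) * h2 + ((1/36)) * h3 + ((-1/4)) * hI

lemma dt02 : ‖star u₀ ⬝ᵥ w2‖ = (Real.sqrt 3)⁻¹ := by
  apply abs_of_mulconj
  simp [u₀, w2, dotProduct, Fin.sum_univ_two, Complex.conj_ofReal, map_ofNat, map_inv₀, map_div₀, Complex.ofReal_inv, Complex.ofReal_ofNat]
  linear_combination (0) * h2 + ((-1/9)*Complex.I^2) * h3 + ((-1/3)) * hI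

lemma dt03 : ‖star u₀ ⬝ᵥ w3‖ = (Real.sqrt 3)⁻¹ := by
  apply abs_of_mulconj
  simp [u₀, w3, dotProduct, Fin.sum_univ_two, Complex.conj_ofReal, map_ofNat, map_inv₀, map_div₀, Complex.ofReal_inv, Complex.ofReal_ofNat]
  linear_combination (0) * h2 + ((1/9)) * h3 + (0) * hI

lemma dt12 : ‖star w1 ⬝ᵥ w2‖ = (Real.sqrt 3)⁻¹ := by
  apply abs_of_mulconj
  simp [w1, w2, dotProduct, Fin.sum_univ_two, Complex.conj_ofReal, map_ofNat, map_inv₀, map_div₀, Complex.ofReal_inv, Complex.ofReal_ofNat]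
  linear_combination ((-1/8)*Complex.I^2 + (1/72)*(Real.sqrt 3:ℂ)^2 + (-1/72)*(Real.sqrt 3:ℂ)^2*Complex.I^4 + (1/648)*(Real.sqrt 3:ℂ)^4*Complex.I^2 + (-1/16)*(Real.sqrt 2:ℂ)^2*Complex.I^2 + (1/144)*(Real.sqrt 2:ℂ)^2*(Real.sqrt 3:ℂ)^2 + (1/144)*(Real.sqrt 2:ℂ)^2*(Real.sqrt 3:ℂ)^2*Complex.I^4 + (-1/1296)*(Real.sqrt 2:ℂ)^2*(Real.sqrt 3:ℂ)^4*Complex.I^2) * h2 + ((1/36)) * h3 + ((-1/4)) * hI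

lemma dt13 : ‖star w1 ⬝ᵥ w3‖ = (Real.sqrt 3)⁻¹ := by
  apply abs_of_mulconj
  simp [w1, w3, dotProduct, Fin.sum_univ_two, Complex.conj_ofReal, map_ofNat, map_inv₀, map_div₀, Complex.ofReal_inv, Complex.ofReal_ofNat]
  linear_combination ((1/8)*Complex.I^4 + (-1/648)*(Real.sqrt 3:ℂ)^4 + (1/16)*(Real.sqrt 2:ℂ)^2*Complex.I^4 + (-1/72)*(Real.sqrt 2:ℂ)^2*(Real.sqrt 3:ℂ)^2*Complex.I^2 + (1/1296)*(Real.sqrt 2:ℂ)^2*(Real.sqrt 3:ℂ)^4) * h2 + ((-1/36)*Complex.I^2) * h3 + ((-1/3) + (1/4)*Complex.I^2) * hI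

lemma dt23 : ‖star w2 ⬝ᵥ w3‖ = (Real.sqrt 3)⁻¹ := by
  apply abs_of_mulconj
  simp [w2, w3, dotProduct, Fin.sum_univ_two, Complex.conj_ofReal, map_ofNat, map_inv₀, map_div₀, Complex.ofReal_inv, Complex.ofReal_ofNat]
  linear_combination ((-1/8)*Complex.I^2 + (1/72)*(Real.sqrt 3:ℂ)^2 + (1/18)*(Real.sqrt 3:ℂ)^2*Complex.I^2 + (1/72)*(Real.sqrt 3:ℂ)^2*Complex.I^4 + (-5/648)*(Real.sqrt 3:ℂ)^4*Complex.I^2 + (-1/16)*(Real.sqrt 2:ℂ)^2*Complex.I^2 + (1/144)*(Real.sqrt 2:ℂ)^2*(Real.sqrt 3:ℂ)^2 + (1/144)*(Real.sqrt 2:ℂ)^2*(Real.sqrt 3:ℂ)^2*Complex.I^4 + (-1/1296)*(Real.sqrt 2:ℂ)^2*(Real.sqrt 3:ℂ)^4*Complex.I^2) * h2 + ((1/36) + (1/36)*Complex.I^2 + (1/36)*Complex.I^4 + (-1/36)*(Real.sqrt 3:ℂ)^2*Complex.I^2) * h3 + ((-1/4) + (1/12)*Complex.I^2) * hI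

theorem stmt3 :
    (∀ j : Fin 4, star ((B ^ (j : ℕ)).mulVec u₀) ⬝ᵥ (B ^ (j : ℕ)).mulVec u₀ = 1) ∧
    (∀ j k : Fin 4, j < k →
      ‖star ((B ^ (j : ℕ)).mulVec u₀) ⬝ᵥ (B ^ (k : ℕ)).mulVec u₀‖ =
        (Real.sqrt 3)⁻¹) := by
  constructor
  · intro j
    fin_cases j
    · show star ((B ^ (0:ℕ)).mulVec u₀) ⬝ᵥ (B ^ (0:ℕ)).mulVec u₀ = 1
      rw [p0]; exact nrm0
    · show star ((B ^ (1:ℕ)).mulVec u₀) ⬝ᵥ (B ^ (1:ℕ)).mulVec u₀ = 1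
      rw [p1]; exact nrm1
    · show star ((B ^ (2:ℕ)).mulVec u₀) ⬝ᵥ (B ^ (2:ℕ)).mulVec u₀ = 1
      rw [p2]; exact nrm2
    · show star ((B ^ (3:ℕ)).mulVec u₀) ⬝ᵥ (B ^ (3:ℕ)).mulVec u₀ = 1
      rw [p3]; exact nrm3
  · intro j k hjk
    fin_cases j <;> fin_cases k <;> try exact absurd hjk (by decide)
    · show ‖star ((B ^ (0:ℕ)).mulVec u₀) ⬝ᵥ (B ^ (1:ℕ)).mulVec u₀‖ = (Real.sqrt 3)⁻¹
      rw [p0, p1]; exact dt01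
    · show ‖star ((B ^ (0:ℕ)).mulVec u₀) ⬝ᵥ (B ^ (2:ℕ)).mulVec u₀‖ = (Real.sqrt 3)⁻¹
      rw [p0, p2]; exact dt02
    · show ‖star ((B ^ (0:ℕ)).mulVec u₀) ⬝ᵥ (B ^ (3:ℕ)).mulVec u₀‖ = (Real.sqrt 3)⁻¹
      rw [p0, p3]; exact dt03
    · show ‖star ((B ^ (1:ℕ)).mulVec u₀) ⬝ᵥ (B ^ (2:ℕ)).mulVec u₀‖ = (Real.sqrt 3)⁻¹
      rw [p1, p2]; exact dt12
    · show ‖star ((B ^ (1:ℕ)).mulVec u₀) ⬝ᵥ (B ^ (3:ℕ)).mulVec u₀‖ = (Real.sqrt 3)⁻¹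
      rw [p1, p3]; exact dt13
    · show ‖star ((B ^ (2:ℕ)).mulVec u₀) ⬝ᵥ (B ^ (3:ℕ)).mulVec u₀‖ = (Real.sqrt 3)⁻¹
      rw [p2, p3]; exact dt23
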